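/- arXiv:1011.3284 — 6 statements merged into one kernel-verified Lean document; each statement's English description precedes it below -/
import Mathlib

section
/- Let q_a(u₁,…,u_r) be the Schur q-functions defined by ∏_{i=1}^r (1+u_i t)/(1-u_i t) = ∑_{a≥0} q_a(u) t^a. Then for all a ≥ 1, q_a ≡ 2·p_a(u) mod 4ℤ[u₁,…,u_r], where p_a denotes the a-th power sum symmetric polynomial p_a(u) = ∑_{i=1}^r u_i^a. -/
open PowerSeries

private lemma geom_aux {A : Type*} [CommRing A] (c : A) :
    (PowerSeries.mk fun a => if a = 0 then 0 else c ^ a) =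
      PowerSeries.C (R := A) c * PowerSeries.X *
        (1 + PowerSeries.mk fun a => if a = 0 then 0 else c ^ a) := by
  ext n
  rw [mul_assoc]
  cases n with
  | zero => simp
  | succ n =>
    rw [PowerSeries.coeff_C_mul, PowerSeries.coeff_succ_X_mul]
    simp only [map_add, PowerSeries.coeff_one, PowerSeries.coeff_mk]
    cases n with
    | zero => simp
    | succ m => simp [pow_succ, mul_comm]

private lemma step_aux {A : Type*} [CommRing A] (h4 : (4 : A) = 0) (c : A) (P : A⟦X⟧) :
    (1 + PowerSeries.C (R := A) c * PowerSeries.X) * (1 + 2 * P) =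
      (1 + 2 * (P + PowerSeries.mk fun a => if a = 0 then 0 else c ^ a)) *
        (1 - PowerSeries.C (R := A) c * PowerSeries.X) := by
  have h4' : (4 : A⟦X⟧) = 0 := by
    rw [show (4 : A⟦X⟧) = PowerSeries.C (R := A) 4 from (map_ofNat _ 4).symm, h4, map_zero]
  have hg := geom_aux c
  linear_combination (-2 : A⟦X⟧) * hg + (PowerSeries.C (R := A) c * PowerSeries.X * P) * h4'

private lemma prod_aux {A : Type*} [CommRing A] (h4 : (4 : A) = 0) {ι : Type*}
    (u : ι → A) (s : Finset ι) :
    ∏ i ∈ s, (1 + PowerSeries.C (R := A) (u i) * PowerSeries.X) =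
      (1 + 2 * PowerSeries.mk fun a => if a = 0 then 0 else ∑ i ∈ s, u i ^ a) *
        ∏ i ∈ s, (1 - PowerSeries.C (R := A) (u i) * PowerSeries.X) := by
  classical
  induction s using Finset.induction_on with
  | empty =>
    have h0 : (PowerSeries.mk fun _ : ℕ => (0:A)) = 0 := by ext n; simp
    simp [h0]
  | @insert j s hj ih =>
    have hP : (PowerSeries.mk fun a => if a = 0 then (0:A) else ∑ i ∈ insert j s, u i ^ a) =
        (PowerSeries.mk fun a => if a = 0 then 0 else ∑ i ∈ s, u i ^ a) +
          (PowerSeries.mk fun a => if a = 0 then 0 else u j ^ a) := by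
      ext n; cases n <;> simp [Finset.sum_insert hj, add_comm]
    rw [Finset.prod_insert hj, Finset.prod_insert hj, ih, hP, ← mul_assoc,
      ← mul_assoc, step_aux h4 (u j)]

/-- For a ≥ 1, the Schur q-function q_a is congruent to 2·p_a modulo 4ℤ[u₁,…,u_r],
where p_a is the a-th power sum. -/
theorem stmt1 (r : ℕ) (q : ℕ → MvPolynomial (Fin r) ℤ)
    (hq : (PowerSeries.mk fun a => q a) *
        ∏ i : Fin r, (1 - PowerSeries.C (R := MvPolynomial (Fin r) ℤ) (MvPolynomial.X i) * PowerSeries.X)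
      = ∏ i : Fin r, (1 + PowerSeries.C (R := MvPolynomial (Fin r) ℤ) (MvPolynomial.X i) * PowerSeries.X)) :
    ∀ a : ℕ, 1 ≤ a →
      ∃ h : MvPolynomial (Fin r) ℤ,
        q a - 2 * (∑ i : Fin r, MvPolynomial.X i ^ a) = 4 * h := by
  intro a ha
  set A := MvPolynomial (Fin r) (ZMod 4)
  have h4 : (4 : A) = 0 := by
    rw [show (4 : A) = MvPolynomial.C (4 : ZMod 4) from (map_ofNat _ 4).symm,
      show (4 : ZMod 4) = 0 from rfl, map_zero]
  set φ : MvPolynomial (Fin r) ℤ →+* A := MvPolynomial.map (Int.castRingHom (ZMod 4))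
  -- map the equation
  have hq' : (PowerSeries.mk fun a => φ (q a)) *
        ∏ i : Fin r, (1 - PowerSeries.C (R := A) (MvPolynomial.X i) * PowerSeries.X)
      = ∏ i : Fin r, (1 + PowerSeries.C (R := A) (MvPolynomial.X i) * PowerSeries.X) := by
    have := congrArg (PowerSeries.map φ) hq
    simp only [map_mul, map_prod, map_sub, map_add, map_one, PowerSeries.map_C,
      PowerSeries.map_X] at this
    have hx : ∀ i : Fin r, φ (MvPolynomial.X i) = MvPolynomial.X i := fun i =>
      MvPolynomial.map_X _ i
    simp only [hx] at this
    exact this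
  have hD : IsUnit (∏ i : Fin r, (1 - PowerSeries.C (R := A) (MvPolynomial.X i) * PowerSeries.X)) := by
    rw [PowerSeries.isUnit_iff_constantCoeff]
    simp
  have key : (PowerSeries.mk fun a => φ (q a)) =
      1 + 2 * PowerSeries.mk fun a => if a = 0 then 0 else ∑ i : Fin r, MvPolynomial.X i ^ a :=
    hD.mul_right_cancel (hq'.trans (prod_aux h4 (fun i : Fin r => MvPolynomial.X i) Finset.univ))
  have ha0 : a ≠ 0 := Nat.one_le_iff_ne_zero.mp ha
  have hc := congrArg (PowerSeries.coeff (R := A) a) key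
  rw [map_add, PowerSeries.coeff_mk,
    show (2 : PowerSeries A) = PowerSeries.C (R := A) 2 from (map_ofNat _ 2).symm,
    PowerSeries.coeff_C_mul, PowerSeries.coeff_mk, if_neg ha0,
    PowerSeries.coeff_one, if_neg ha0, zero_add] at hc
  -- hc : φ (q a) = 2 * ∑ i, X i ^ a
  have hφ0 : φ (q a - 2 * ∑ i : Fin r, MvPolynomial.X i ^ a) = 0 := by
    rw [map_sub, map_mul, map_sum, hc]
    have : φ 2 = 2 := map_ofNat φ 2
    rw [this]
    have hx : ∀ i : Fin r, φ (MvPolynomial.X i ^ a) = MvPolynomial.X i ^ a := fun i => by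
      rw [map_pow, MvPolynomial.map_X]
    simp only [hx, sub_self]
  set f := q a - 2 * ∑ i : Fin r, MvPolynomial.X i ^ a with hf
  have hdvd : MvPolynomial.C (4 : ℤ) ∣ f := by
    rw [MvPolynomial.C_dvd_iff_dvd_coeff]
    intro m
    have := congrArg (MvPolynomial.coeff m) hφ0
    rw [MvPolynomial.coeff_map, MvPolynomial.coeff_zero] at this
    exact (ZMod.intCast_zmod_eq_zero_iff_dvd _ 4).mp this
  obtain ⟨h, hh⟩ := hdvd
  exact ⟨h, by rw [hh, show MvPolynomial.C (4:ℤ) = (4 : MvPolynomial (Fin r) ℤ) from map_ofNat _ 4]⟩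
end

section
/- With q_a the Schur q-functions in variables u₁,…,u_r, define η_a⁺(u) = q_{a+1}(u) + ((-1)^{r-1}/2)·q_a(u) + (1/2)·δ_{a,0} for a ≥ 0, a priori an element of ℤ[1/2][u₁,…,u_r]. Then η_a⁺(u) has integer coefficients, i.e. η_a⁺(u) ∈ ℤ[u₁,…,u_r]. -/
private lemma two_dvd_of_map_zmod2 {σ : Type*} (P : MvPolynomial σ ℤ)
    (h : MvPolynomial.map (Int.castRingHom (ZMod 2)) P = 0) : ∃ P', P = 2 * P' := by
  have hC : (MvPolynomial.C (2 : ℤ) : MvPolynomial σ ℤ) ∣ P := by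
    rw [MvPolynomial.C_dvd_iff_dvd_coeff]
    intro i
    have h2 := congrArg (MvPolynomial.coeff i) h
    rw [MvPolynomial.coeff_map] at h2
    have h3 : ((P.coeff i : ℤ) : ZMod 2) = 0 := by simpa using h2
    exact_mod_cast (ZMod.intCast_zmod_eq_zero_iff_dvd _ 2).mp h3
  obtain ⟨P', hP'⟩ := hC
  exact ⟨P', by simpa using hP'⟩

/-- η_a⁺(u) = q_{a+1}(u) + ((-1)^{r-1}/2)·q_a(u) + (1/2)·δ_{a,0}, a priori in ℚ[u₁,…,u_r],
actually has integer coefficients. -/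
theorem stmt2 (r : ℕ) (q : ℕ → MvPolynomial (Fin r) ℚ)
    (hq : (PowerSeries.mk fun a => q a) *
        ∏ i : Fin r, (1 - PowerSeries.C (MvPolynomial.X i : MvPolynomial (Fin r) ℚ) * PowerSeries.X)
      = ∏ i : Fin r, (1 + PowerSeries.C (MvPolynomial.X i : MvPolynomial (Fin r) ℚ) * PowerSeries.X))
    (η : ℕ → MvPolynomial (Fin r) ℚ)
    (hη : ∀ a : ℕ, η a = q (a + 1) + MvPolynomial.C ((-1 : ℚ) ^ (r - 1) / 2) * q a
      + MvPolynomial.C (if a = 0 then (1 / 2 : ℚ) else 0)) :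
    ∀ a : ℕ, ∃ P : MvPolynomial (Fin r) ℤ,
      MvPolynomial.map (Int.castRingHom ℚ) P = η a := by
  set A' : PowerSeries (MvPolynomial (Fin r) ℤ) :=
    ∏ i : Fin r, (1 - PowerSeries.C (MvPolynomial.X i) * PowerSeries.X) with hA'
  set B' : PowerSeries (MvPolynomial (Fin r) ℤ) :=
    ∏ i : Fin r, (1 + PowerSeries.C (MvPolynomial.X i) * PowerSeries.X) with hB'
  have hcA : PowerSeries.constantCoeff A' = 1 := by
    simp [hA', map_prod]
  have hAu : IsUnit A' := by
    rw [PowerSeries.isUnit_iff_constantCoeff, hcA]; exact isUnit_one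
  obtain ⟨U, hU⟩ := hAu
  set Q : PowerSeries (MvPolynomial (Fin r) ℤ) := B' * ↑U⁻¹ with hQdef
  have hQA : Q * A' = B' := by
    rw [hQdef, ← hU, mul_assoc]
    simp
  -- map to ℚ
  set φ : PowerSeries (MvPolynomial (Fin r) ℤ) →+* PowerSeries (MvPolynomial (Fin r) ℚ) :=
    PowerSeries.map (MvPolynomial.map (Int.castRingHom ℚ)) with hφ
  have hφA : φ A' = ∏ i : Fin r,
      (1 - PowerSeries.C (MvPolynomial.X i : MvPolynomial (Fin r) ℚ) * PowerSeries.X) := by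
    simp [hφ, hA', map_prod]
  have hφB : φ B' = ∏ i : Fin r,
      (1 + PowerSeries.C (MvPolynomial.X i : MvPolynomial (Fin r) ℚ) * PowerSeries.X) := by
    simp [hφ, hB', map_prod]
  have hφAu : IsUnit (φ A') := IsUnit.map φ ⟨U, hU⟩
  have hmkq : PowerSeries.mk (fun a => q a) = φ Q := by
    have h1 : PowerSeries.mk (fun a => q a) * φ A' = φ Q * φ A' := by
      rw [← map_mul, hQA, hφB, hφA, hq]
    exact hφAu.mul_right_cancel h1
  have hqa : ∀ a : ℕ, q a
      = MvPolynomial.map (Int.castRingHom ℚ) (PowerSeries.coeff a Q) := by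
    intro a
    have := congrArg (PowerSeries.coeff a) hmkq
    simpa [hφ, PowerSeries.coeff_map] using this
  -- q 0 = 1
  have hq0 : q 0 = 1 := by
    have := congrArg (PowerSeries.constantCoeff) hq
    simpa [map_prod] using this
  -- map to ZMod 2 : Q ≡ 1
  set ψ : PowerSeries (MvPolynomial (Fin r) ℤ) →+* PowerSeries (MvPolynomial (Fin r) (ZMod 2)) :=
    PowerSeries.map (MvPolynomial.map (Int.castRingHom (ZMod 2))) with hψ
  have h2z : (2 : PowerSeries (MvPolynomial (Fin r) (ZMod 2))) = 0 := by
    have : ((2 : ℕ) : PowerSeries (MvPolynomial (Fin r) (ZMod 2)))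
        = PowerSeries.C ((2 : ℕ) : MvPolynomial (Fin r) (ZMod 2)) := by
      push_cast
      exact (map_ofNat (PowerSeries.C (R := MvPolynomial (Fin r) (ZMod 2))) 2).symm
    have h0 : ((2 : ℕ) : MvPolynomial (Fin r) (ZMod 2)) = 0 := by
      have : ((2 : ℕ) : ZMod 2) = 0 := by decide
      rw [← MvPolynomial.C_eq_coe_nat, this, map_zero]
    rw [show (2 : PowerSeries (MvPolynomial (Fin r) (ZMod 2))) = ((2:ℕ) : _) by norm_cast,
      this, h0, map_zero]
  have hneg : ∀ x : PowerSeries (MvPolynomial (Fin r) (ZMod 2)), -x = x := by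
    intro x
    have : x + x = 0 := by rw [← two_mul, h2z, zero_mul]
    exact neg_eq_of_add_eq_zero_left this
  have hψAB : ψ A' = ψ B' := by
    rw [hψ, hA', hB', map_prod, map_prod]
    refine Finset.prod_congr rfl fun i _ => ?_
    rw [map_sub, map_add, sub_eq_add_neg, hneg]
  have hψAu : IsUnit (ψ A') := IsUnit.map ψ ⟨U, hU⟩
  have hψQ : ψ Q = 1 := by
    have h1 : ψ Q * ψ A' = 1 * ψ A' := by
      rw [← map_mul, hQA, one_mul, hψAB]
    exact hψAu.mul_right_cancel h1
  have heven : ∀ a : ℕ, 1 ≤ a → ∃ P' : MvPolynomial (Fin r) ℤ,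
      PowerSeries.coeff a Q = 2 * P' := by
    intro a ha
    apply two_dvd_of_map_zmod2
    have := congrArg (PowerSeries.coeff a) hψQ
    rw [hψ, PowerSeries.coeff_map] at this
    rw [this, PowerSeries.coeff_one, if_neg (by omega)]
  intro a
  match a with
  | 0 =>
    refine ⟨PowerSeries.coeff 1 Q
      + MvPolynomial.C (if Even (r - 1) then (1 : ℤ) else 0), ?_⟩
    rw [hη 0, hq0, hqa 1, if_pos rfl, map_add, MvPolynomial.map_C, mul_one, add_assoc, ← map_add]
    congr 1
    rcases Nat.even_or_odd (r - 1) with he | ho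
    · rw [if_pos he, he.neg_one_pow]
      norm_num
    · rw [if_neg (by simpa using ho), ho.neg_one_pow]
      norm_num
  | (a + 1) =>
    obtain ⟨P', hP'⟩ := heven (a + 1) (by omega)
    refine ⟨PowerSeries.coeff (a + 2) Q + (-1) ^ (r - 1) * P', ?_⟩
    rw [hη (a + 1), if_neg (by omega), hqa (a + 2)]
    have hq1 : q (a + 1) = 2 * MvPolynomial.map (Int.castRingHom ℚ) P' := by
      rw [hqa (a + 1), hP', map_mul]
      norm_num
    have hmapP : MvPolynomial.map (Int.castRingHom ℚ)
          (PowerSeries.coeff (a + 2) Q + (-1) ^ (r - 1) * P')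
        = MvPolynomial.map (Int.castRingHom ℚ) (PowerSeries.coeff (a + 2) Q)
          + (-1 : MvPolynomial (Fin r) ℚ) ^ (r - 1)
            * MvPolynomial.map (Int.castRingHom ℚ) P' := by
      simp
    have hC2 : MvPolynomial.C ((-1 : ℚ) ^ (r - 1) / 2) * 2
        = (-1 : MvPolynomial (Fin r) ℚ) ^ (r - 1) := by
      rw [show (2 : MvPolynomial (Fin r) ℚ) = MvPolynomial.C 2
          from (map_ofNat (MvPolynomial.C (R := ℚ) (σ := Fin r)) 2).symm,
        ← map_mul, div_mul_cancel₀ _ (two_ne_zero (α := ℚ))]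
      simp
    rw [hmapP, hq1, map_zero, add_zero, ← mul_assoc, hC2]
end

section
/- Let S be a commutative ring of characteristic 2 and u₁,…,u_r ∈ S. Then the evaluation of the Schur q-function q_a at (u₁,…,u_r) is 0 for all a ≥ 1, while the evaluation of the integer polynomial (1/2)q_a (which lies in ℤ[u₁,…,u_r]) equals ∑_i u_i^a. -/
open PowerSeries

section Aux
variable {R : Type*} [CommRing R]

private lemma stmt4_geom (u : R) :
    (PowerSeries.mk fun a => u ^ a) * (1 - PowerSeries.C u * PowerSeries.X) = 1 := by
  rw [mul_sub, mul_one, show (PowerSeries.mk fun a => u ^ a) * (PowerSeries.C u * PowerSeries.X)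
      = PowerSeries.C u * (PowerSeries.X * PowerSeries.mk fun a => u ^ a) by ring]
  ext n
  cases n with
  | zero => simp
  | succ n => simp [coeff_succ_X_mul, pow_succ, mul_comm, coeff_one]

private lemma stmt4_mkeq (u : R) :
    (PowerSeries.mk fun a => if a = 0 then (0 : R) else u ^ a)
      = PowerSeries.C u * (PowerSeries.X * PowerSeries.mk fun a => u ^ a) := by
  ext n
  cases n with
  | zero => simp
  | succ n => simp [coeff_succ_X_mul, pow_succ, mul_comm]

private lemma stmt4_base (u : R) :
    (1 + 2 * PowerSeries.mk fun a => if a = 0 then (0 : R) else u ^ a) *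
      (1 - PowerSeries.C u * PowerSeries.X) = 1 + PowerSeries.C u * PowerSeries.X := by
  rw [stmt4_mkeq]
  have h := stmt4_geom u
  calc (1 + 2 * (PowerSeries.C u * (PowerSeries.X * PowerSeries.mk fun a => u ^ a))) *
        (1 - PowerSeries.C u * PowerSeries.X)
      = (1 - PowerSeries.C u * PowerSeries.X) + (2 * (PowerSeries.C u * PowerSeries.X)) *
          ((PowerSeries.mk fun a => u ^ a) * (1 - PowerSeries.C u * PowerSeries.X)) := by ring
    _ = 1 + PowerSeries.C u * PowerSeries.X := by rw [h]; ring

private lemma stmt4_key {ι : Type*} (h4 : (4 : R) = 0) (u : ι → R) (s : Finset ι) :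
    ∏ i ∈ s, (1 + PowerSeries.C (u i) * PowerSeries.X)
      = (1 + 2 * PowerSeries.mk fun a => if a = 0 then (0 : R) else ∑ i ∈ s, u i ^ a) *
        ∏ i ∈ s, (1 - PowerSeries.C (u i) * PowerSeries.X) := by
  classical
  have h4' : (4 : R⟦X⟧) = 0 := by
    rw [← map_ofNat (PowerSeries.C (R := R)) 4, h4, map_zero]
  induction s using Finset.induction with
  | empty =>
    rw [show (PowerSeries.mk fun a => if a = 0 then (0 : R) else ∑ i ∈ (∅ : Finset ι), u i ^ a)
        = 0 from by ext n; simp]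
    simp
  | @insert j s hj ih =>
    rw [Finset.prod_insert hj, Finset.prod_insert hj, ih]
    have hsum : (PowerSeries.mk fun a => if a = 0 then (0 : R) else ∑ i ∈ insert j s, u i ^ a)
        = (PowerSeries.mk fun a => if a = 0 then (0 : R) else u j ^ a)
          + PowerSeries.mk fun a => if a = 0 then (0 : R) else ∑ i ∈ s, u i ^ a := by
      ext n
      rw [map_add]
      simp only [coeff_mk, Finset.sum_insert hj]
      split <;> simp
    rw [hsum]
    set Mj := PowerSeries.mk fun a => if a = 0 then (0 : R) else u j ^ a
    set Ms := PowerSeries.mk fun a => if a = 0 then (0 : R) else ∑ i ∈ s, u i ^ a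
    have h1 := stmt4_base (u j)
    have h2 : (1 + 2 * Mj) * (1 + 2 * Ms) = 1 + 2 * (Mj + Ms) := by
      linear_combination (Mj * Ms) * h4'
    calc (1 + PowerSeries.C (u j) * PowerSeries.X) *
          ((1 + 2 * Ms) * ∏ i ∈ s, (1 - PowerSeries.C (u i) * PowerSeries.X))
        = ((1 + 2 * Mj) * (1 - PowerSeries.C (u j) * PowerSeries.X)) *
          ((1 + 2 * Ms) * ∏ i ∈ s, (1 - PowerSeries.C (u i) * PowerSeries.X)) := by rw [h1]
      _ = ((1 + 2 * Mj) * (1 + 2 * Ms)) *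
          ((1 - PowerSeries.C (u j) * PowerSeries.X) *
            ∏ i ∈ s, (1 - PowerSeries.C (u i) * PowerSeries.X)) := by ring
      _ = (1 + 2 * (Mj + Ms)) *
          ((1 - PowerSeries.C (u j) * PowerSeries.X) *
            ∏ i ∈ s, (1 - PowerSeries.C (u i) * PowerSeries.X)) := by rw [h2]

end Aux
/-- In a commutative ring S of characteristic 2: the evaluation of the Schur q-function
q_a at (u₁,…,u_r) is 0 for a ≥ 1, while the evaluation of the integer polynomial (1/2)q_a
equals ∑ᵢ uᵢᵃ. -/
theorem stmt4 (r : ℕ) (q : ℕ → MvPolynomial (Fin r) ℤ)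
    (hq : (PowerSeries.mk fun a => q a) *
        ∏ i : Fin r, (1 - PowerSeries.C (MvPolynomial.X i : MvPolynomial (Fin r) ℤ) * PowerSeries.X)
      = ∏ i : Fin r, (1 + PowerSeries.C (MvPolynomial.X i : MvPolynomial (Fin r) ℤ) * PowerSeries.X))
    (half : ℕ → MvPolynomial (Fin r) ℤ)
    (hhalf : ∀ a : ℕ, 1 ≤ a → 2 * half a = q a)
    (S : Type*) [CommRing S] [CharP S 2] (u : Fin r → S) :
    ∀ a : ℕ, 1 ≤ a →
      MvPolynomial.eval₂ (Int.castRingHom S) u (q a) = 0 ∧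
      MvPolynomial.eval₂ (Int.castRingHom S) u (half a) = ∑ i : Fin r, u i ^ a := by
  have h4 : (4 : MvPolynomial (Fin r) (ZMod 4)) = 0 := by
    rw [← map_ofNat (MvPolynomial.C : ZMod 4 →+* MvPolynomial (Fin r) (ZMod 4)) 4,
      show ((4 : ZMod 4) : ZMod 4) = 0 from by decide, map_zero]
  -- push hq to ZMod 4 coefficients
  have hmk : PowerSeries.map (MvPolynomial.map (Int.castRingHom (ZMod 4))) (PowerSeries.mk fun a => q a)
      = PowerSeries.mk fun a => (MvPolynomial.map (Int.castRingHom (ZMod 4))) (q a) := by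
    ext n; simp [PowerSeries.coeff_map]
  have hmap := congrArg (PowerSeries.map (MvPolynomial.map (Int.castRingHom (ZMod 4)))) hq
  rw [map_mul, hmk] at hmap
  simp only [map_prod, map_sub, map_add, map_one, map_mul, PowerSeries.map_C, PowerSeries.map_X,
    MvPolynomial.map_X] at hmap
  have hkey := stmt4_key (R := MvPolynomial (Fin r) (ZMod 4)) h4 (fun i => MvPolynomial.X i) Finset.univ
  have hAunit : IsUnit (∏ i : Fin r,
      (1 - PowerSeries.C (MvPolynomial.X i : MvPolynomial (Fin r) (ZMod 4)) * PowerSeries.X)) := by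
    rw [PowerSeries.isUnit_iff_constantCoeff, map_prod]
    simp
  have hcancel : (PowerSeries.mk fun a => (MvPolynomial.map (Int.castRingHom (ZMod 4))) (q a))
      = 1 + 2 * PowerSeries.mk fun a =>
          if a = 0 then (0 : MvPolynomial (Fin r) (ZMod 4)) else ∑ i : Fin r, MvPolynomial.X i ^ a := by
    refine hAunit.mul_right_cancel ?_
    rw [← hkey]
    exact hmap
  have hq4 : ∀ a : ℕ, 1 ≤ a → (MvPolynomial.map (Int.castRingHom (ZMod 4))) (q a) = 2 * ∑ i : Fin r, MvPolynomial.X i ^ a := by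
    intro a ha
    have hco := congrArg (PowerSeries.coeff a) hcancel
    rw [PowerSeries.coeff_mk, two_mul, map_add, map_add, PowerSeries.coeff_one,
      if_neg (by omega : ¬a = 0), PowerSeries.coeff_mk, if_neg (by omega : ¬a = 0), zero_add,
      ← two_mul] at hco
    exact hco
  -- mod 2 statement for half
  have hhalf2 : ∀ a : ℕ, 1 ≤ a →
      MvPolynomial.map (Int.castRingHom (ZMod 2)) (half a) = ∑ i : Fin r, MvPolynomial.X i ^ a := by
    intro a ha
    have h1 : (MvPolynomial.map (Int.castRingHom (ZMod 4))) (2 * (half a - ∑ i : Fin r, MvPolynomial.X i ^ a)) = 0 := by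
      rw [mul_sub, map_sub, hhalf a ha, hq4 a ha, map_mul, map_sum]
      simp [MvPolynomial.map_X, map_ofNat, map_pow]
    have h2 : MvPolynomial.map (Int.castRingHom (ZMod 2))
        (half a - ∑ i : Fin r, MvPolynomial.X i ^ a) = 0 := by
      ext m
      have h1' := congrArg (MvPolynomial.coeff m) h1
      rw [MvPolynomial.coeff_map, MvPolynomial.coeff_zero,
        show (2 : MvPolynomial (Fin r) ℤ) = MvPolynomial.C 2 from
          (map_ofNat (MvPolynomial.C : ℤ →+* MvPolynomial (Fin r) ℤ) 2).symm,
        MvPolynomial.coeff_C_mul] at h1'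
      rw [MvPolynomial.coeff_map, MvPolynomial.coeff_zero]
      set c := (half a - ∑ i : Fin r, MvPolynomial.X i ^ a).coeff m with hc
      have h4d : ((4 : ℤ)) ∣ 2 * c := by
        rwa [show (Int.castRingHom (ZMod 4)) (2 * c) = ((2 * c : ℤ) : ZMod 4) from rfl,
          ZMod.intCast_zmod_eq_zero_iff_dvd] at h1'
      rw [show (Int.castRingHom (ZMod 2)) c = ((c : ℤ) : ZMod 2) from rfl,
        ZMod.intCast_zmod_eq_zero_iff_dvd]
      omega
    have h3 : MvPolynomial.map (Int.castRingHom (ZMod 2)) (half a)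
        = MvPolynomial.map (Int.castRingHom (ZMod 2)) (∑ i : Fin r, MvPolynomial.X i ^ a) :=
      sub_eq_zero.mp (by rwa [map_sub] at h2)
    rw [h3, map_sum]
    simp [MvPolynomial.map_X, map_pow]
  -- transfer to S via ZMod 2
  intro a ha
  set g : ZMod 2 →+* S := ZMod.castHom (dvd_refl 2) S with hg
  have hcomp : g.comp (Int.castRingHom (ZMod 2)) = Int.castRingHom S := RingHom.ext_int _ _
  have he : ∀ p : MvPolynomial (Fin r) ℤ, MvPolynomial.eval₂ (Int.castRingHom S) u p
      = MvPolynomial.eval₂ g u (MvPolynomial.map (Int.castRingHom (ZMod 2)) p) := by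
    intro p; rw [MvPolynomial.eval₂_map, hcomp]
  have h20 : (MvPolynomial.map (Int.castRingHom (ZMod 2))) (2 : MvPolynomial (Fin r) ℤ) = 0 := by
    rw [map_ofNat, ← map_ofNat (MvPolynomial.C : ZMod 2 →+* MvPolynomial (Fin r) (ZMod 2)) 2,
      show ((2 : ZMod 2) : ZMod 2) = 0 from by decide, map_zero]
  constructor
  · rw [he, ← hhalf a ha, map_mul, h20, zero_mul, MvPolynomial.eval₂_zero]
  · rw [he, hhalf2 a ha,
      show MvPolynomial.eval₂ g u = ⇑(MvPolynomial.eval₂Hom g u) from rfl, map_sum]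
    simp [map_pow]
end

section
/- Let F be an algebraically closed field of characteristic 2. Suppose a sequence (ω_a)_{a≥0} in F satisfies a linear homogeneous recursion with constant coefficients eventually (i.e., there exist r > 0, N ≥ 0 and a₀,…,a_{r−1} ∈ F with ω_{r+ℓ} + ∑_{j=0}^{r−1} a_j ω_{j+ℓ} = 0 for all ℓ ≥ N), and also satisfies ω_{2a} = ω_a² for all a ≥ 0. Then there exist distinct u₁,…,u_d ∈ F such that ω_a = ∑_{i=1}^d u_i^a for all a ≥ 1, and ω₀ ∈ {0,1}. -/
open Polynomial Finset

section Aux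

variable {F : Type*} [Field F] [CharP F 2]

private lemma geom_unit (w : F) (hw : w ≠ 0) :
    ((X - C w : F[X]) : PowerSeries F) * PowerSeries.mk (fun n => (w⁻¹) ^ (n + 1)) = 1 := by
  have hco : ((X - C w : F[X]) : PowerSeries F) = PowerSeries.X - PowerSeries.C w := by
    rw [Polynomial.coe_sub, Polynomial.coe_X, Polynomial.coe_C]
  rw [hco, sub_mul]
  ext n
  rcases n with _ | n
  · rw [map_sub, PowerSeries.coeff_zero_X_mul, PowerSeries.coeff_C_mul,
      PowerSeries.coeff_mk, PowerSeries.coeff_one]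
    simp only [pow_one, zero_sub, if_pos, CharTwo.neg_eq]
    rw [pow_one]; exact mul_inv_cancel₀ hw
  · rw [map_sub, PowerSeries.coeff_succ_X_mul, PowerSeries.coeff_C_mul,
      PowerSeries.coeff_mk, PowerSeries.coeff_mk, PowerSeries.coeff_one]
    have h1 : w * w⁻¹ ^ (n + 1 + 1) = w⁻¹ ^ (n + 1) := by
      rw [pow_succ' (w⁻¹) (n+1), ← mul_assoc, mul_inv_cancel₀ hw, one_mul]
    rw [h1, sub_self, if_neg (Nat.succ_ne_zero n)]

private lemma prod_mul_sum_geom (T : Finset F) (h0 : ∀ w ∈ T, w ≠ 0) :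
    ((∏ w ∈ T, (X - C w) : F[X]) : PowerSeries F) *
      (∑ w ∈ T, PowerSeries.mk fun n => (w⁻¹) ^ (n + 1))
      = ((derivative (∏ w ∈ T, (X - C w)) : F[X]) : PowerSeries F) := by
  classical
  induction T using Finset.induction_on with
  | empty => simp
  | @insert w T hw ih =>
    have hw0 : w ≠ 0 := h0 w (mem_insert_self w T)
    have h0' : ∀ v ∈ T, v ≠ 0 := fun v hv => h0 v (mem_insert_of_mem hv)
    rw [Finset.prod_insert hw, Finset.sum_insert hw, Polynomial.derivative_mul,
      Polynomial.coe_mul, mul_add]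
    have e1 : ((X - C w : F[X]) : PowerSeries F) * ((∏ v ∈ T, (X - C v) : F[X]) : PowerSeries F) *
        PowerSeries.mk (fun n => (w⁻¹) ^ (n + 1))
        = ((∏ v ∈ T, (X - C v) : F[X]) : PowerSeries F) := by
      rw [mul_comm (((X - C w : F[X]) : PowerSeries F)), mul_assoc, geom_unit w hw0, mul_one]
    rw [e1, mul_assoc, ih h0', Polynomial.coe_add, Polynomial.coe_mul, Polynomial.coe_mul]
    rw [derivative_sub, derivative_X, derivative_C, sub_zero, Polynomial.coe_one]
    ring


private lemma rep_of_logderiv [IsAlgClosed F] (B : F[X]) (hB0 : B.coeff 0 ≠ 0)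
    (hsep : B.Separable) (h : PowerSeries F)
    (hBh : (B : PowerSeries F) * h = ((derivative B : F[X]) : PowerSeries F)) :
    ∃ (d : ℕ) (u : Fin d → F), Function.Injective u ∧
      ∀ n : ℕ, PowerSeries.coeff n h = ∑ i, u i ^ (n + 1) := by
  classical
  have hBne : B ≠ 0 := fun hB => hB0 (by simp [hB])
  have hsplit : B.Splits := IsAlgClosed.splits B
  have hfac := hsplit.eq_prod_roots
  have hnodup : B.roots.Nodup := nodup_roots hsep
  set T : Finset F := B.roots.toFinset with hT
  have hTval : T.val = B.roots := Multiset.dedup_eq_self.mpr hnodup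
  have hD : ∏ w ∈ T, (X - C w) = (B.roots.map fun w => X - C w).prod := by
    rw [Finset.prod_eq_multiset_prod, hTval]
  have hBD : B = C B.leadingCoeff * ∏ w ∈ T, (X - C w) := by rw [hD]; exact hfac
  have hw0 : ∀ w ∈ T, w ≠ 0 := by
    intro w hwT hw
    have hwr : w ∈ B.roots := Multiset.mem_toFinset.mp hwT
    have := ((mem_roots hBne).mp hwr)
    rw [hw] at this
    exact hB0 (by rwa [Polynomial.coeff_zero_eq_eval_zero])
  have hkey := prod_mul_sum_geom T hw0
  set S : PowerSeries F := ∑ w ∈ T, PowerSeries.mk fun n => (w⁻¹) ^ (n + 1) with hS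
  have hBS : (B : PowerSeries F) * S = ((derivative B : F[X]) : PowerSeries F) := by
    rw [hBD, derivative_C_mul, Polynomial.coe_mul, Polynomial.coe_mul, mul_assoc, hkey]
  have hBcoe : (B : PowerSeries F) ≠ 0 := by
    rw [Ne, Polynomial.coe_eq_zero_iff]; exact hBne
  have hhS : h = S := mul_left_cancel₀ hBcoe (hBh.trans hBS.symm)
  refine ⟨T.card, fun i => (((Fintype.equivFinOfCardEq (Fintype.card_coe T)).symm i : F))⁻¹,
    ?_, ?_⟩
  · intro i j hij
    exact (Fintype.equivFinOfCardEq (Fintype.card_coe T)).symm.injective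
      (Subtype.val_injective (inv_injective hij))
  · intro n
    rw [hhS, hS, map_sum]
    simp only [PowerSeries.coeff_mk]
    rw [← Finset.sum_coe_sort T (fun w => (w : F)⁻¹ ^ (n + 1))]
    exact (Equiv.sum_comp (Fintype.equivFinOfCardEq (Fintype.card_coe T)).symm
      (fun x : T => ((x : F))⁻¹ ^ (n + 1))).symm

private lemma antidiag_even (g : ℕ → F) (b : ℕ) :
    ∑ p ∈ Finset.HasAntidiagonal.antidiagonal (2 * b), g p.1 * g p.2 = g b ^ 2 := by
  classical
  rw [Finset.Nat.sum_antidiagonal_eq_sum_range_succ_mk]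
  have hb : b ∈ Finset.range (2 * b + 1) := by simp; omega
  rw [← Finset.sum_erase_add _ _ hb]
  have hz : ∑ i ∈ (Finset.range (2 * b + 1)).erase b, g i * g (2 * b - i) = 0 := by
    apply Finset.sum_involution (g := fun i _ => 2 * b - i)
    · intro i hi
      have hi' : i ≤ 2 * b := by
        have := Finset.mem_range.mp (Finset.mem_of_mem_erase hi); omega
      have : 2 * b - (2 * b - i) = i := by omega
      rw [this, mul_comm]
      exact CharTwo.add_self_eq_zero _
    · intro i hi _
      have h1 : i ≠ b := Finset.ne_of_mem_erase hi
      have h2 : i ≤ 2 * b := by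
        have := Finset.mem_range.mp (Finset.mem_of_mem_erase hi); omega
      omega
    · intro i hi
      have h1 : i ≠ b := Finset.ne_of_mem_erase hi
      have h2 : i ≤ 2 * b := by
        have := Finset.mem_range.mp (Finset.mem_of_mem_erase hi); omega
      refine Finset.mem_erase.mpr ⟨by omega, Finset.mem_range.mpr (by omega)⟩
    · intro i hi
      have h2 : i ≤ 2 * b := by
        have := Finset.mem_range.mp (Finset.mem_of_mem_erase hi); omega
      omega
  rw [hz, zero_add]
  have : 2 * b - b = b := by omega
  rw [this, pow_two]

private lemma antidiag_odd (g : ℕ → F) (b : ℕ) :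
    ∑ p ∈ Finset.HasAntidiagonal.antidiagonal (2 * b + 1), g p.1 * g p.2 = 0 := by
  classical
  rw [Finset.Nat.sum_antidiagonal_eq_sum_range_succ_mk]
  apply Finset.sum_involution (g := fun i _ => 2 * b + 1 - i)
  · intro i hi
    have hi' : i ≤ 2 * b + 1 := by have := Finset.mem_range.mp hi; omega
    have : 2 * b + 1 - (2 * b + 1 - i) = i := by omega
    rw [this, mul_comm]
    exact CharTwo.add_self_eq_zero _
  · intro i hi _
    have := Finset.mem_range.mp hi; omega
  · intro i hi
    have := Finset.mem_range.mp hi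
    exact Finset.mem_range.mpr (by omega)
  · intro i hi
    have := Finset.mem_range.mp hi; omega

private lemma h_deriv (ω : ℕ → F) (hsq : ∀ a, ω (2 * a) = ω a ^ 2) :
    PowerSeries.derivativeFun (PowerSeries.mk fun n => ω (n + 1))
      = (PowerSeries.mk fun n => ω (n + 1)) ^ 2 := by
  ext n
  change PowerSeries.coeff n (PowerSeries.derivative F _) = _
  rw [PowerSeries.coeff_derivative, pow_two, PowerSeries.coeff_mul, PowerSeries.coeff_mk]
  simp only [PowerSeries.coeff_mk]
  rcases Nat.even_or_odd n with ⟨b, hb⟩ | ⟨b, hb⟩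
  · have hn : n = 2 * b := by omega
    subst hn
    rw [antidiag_even (fun i => ω (i + 1)) b]
    have h1 : ((2 * b : ℕ) : F) + 1 = 1 := by
      push_cast
      rw [CharTwo.two_eq_zero]
      ring
    rw [h1, mul_one]
    have : 2 * b + 1 + 1 = 2 * (b + 1) := by omega
    rw [this, hsq]
  · have hn : n = 2 * b + 1 := by omega
    subst hn
    rw [antidiag_odd (fun i => ω (i + 1)) b]
    have h1 : ((2 * b + 1 : ℕ) : F) + 1 = 0 := by
      push_cast
      linear_combination ((b : F) + 1) * CharTwo.two_eq_zero (R := F)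
    rw [h1, mul_zero]

end Aux

/-- (Buzzard's lemma) Over an algebraically closed field F of characteristic 2: if (ω_a)
satisfies an eventual linear homogeneous recursion and ω_{2a} = ω_a² for all a, then there
exist distinct u₁,…,u_d ∈ F with ω_a = ∑ᵢ uᵢᵃ for all a ≥ 1, and ω₀ ∈ {0,1}. -/
theorem stmt6 (F : Type*) [Field F] [IsAlgClosed F] [CharP F 2]
    (ω : ℕ → F)
    (hrec : ∃ (r : ℕ), 0 < r ∧ ∃ (N : ℕ) (a : ℕ → F),
      ∀ ℓ : ℕ, N ≤ ℓ → ω (r + ℓ) + ∑ j ∈ Finset.range r, a j * ω (j + ℓ) = 0)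
    (hsq : ∀ a : ℕ, ω (2 * a) = ω a ^ 2) :
    ∃ (d : ℕ) (u : Fin d → F), Function.Injective u ∧
      (∀ a : ℕ, 1 ≤ a → ω a = ∑ i : Fin d, u i ^ a) ∧
      (ω 0 = 0 ∨ ω 0 = 1) := by
  classical
  obtain ⟨r, hr, N, a, hrecN⟩ := hrec
  have hω0 : ω 0 = 0 ∨ ω 0 = 1 := by
    have h0 : ω 0 = ω 0 ^ 2 := by simpa using hsq 0
    have h1 : ω 0 * (ω 0 - 1) = 0 := by linear_combination -h0
    rcases mul_eq_zero.mp h1 with hc | hc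
    · exact Or.inl hc
    · exact Or.inr (sub_eq_zero.mp hc)
  set h : PowerSeries F := PowerSeries.mk fun n => ω (n + 1) with hh
  clear_value h
  set Qp : F[X] := 1 + ∑ j ∈ Finset.range r, C (a j) * X ^ (r - j) with hQp
  clear_value Qp
  have hQ0 : Qp.coeff 0 = 1 := by
    rw [hQp, Polynomial.coeff_add, Polynomial.coeff_one, Polynomial.finset_sum_coeff]
    rw [Finset.sum_eq_zero, if_pos rfl, add_zero]
    intro j hj
    rw [Polynomial.coeff_C_mul, Polynomial.coeff_X_pow, if_neg, mul_zero]
    have := Finset.mem_range.mp hj; omega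
  have hQne : Qp ≠ 0 := by
    intro hc
    rw [hc, Polynomial.coeff_zero] at hQ0
    exact zero_ne_one hQ0
  have hQcoe : (Qp : PowerSeries F) = 1 + ∑ j ∈ Finset.range r,
      PowerSeries.C (a j) * PowerSeries.X ^ (r - j) := by
    rw [hQp, Polynomial.coe_add, Polynomial.coe_one]
    congr 1
    have hmap := map_sum (Polynomial.coeToPowerSeries.ringHom (R := F))
      (fun j => C (a j) * X ^ (r - j)) (Finset.range r)
    simp only [Polynomial.coeToPowerSeries.ringHom_apply] at hmap
    rw [hmap]
    apply Finset.sum_congr rfl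
    intro j _
    rw [Polynomial.coe_mul, Polynomial.coe_pow, Polynomial.coe_C, Polynomial.coe_X]
  have hvanish : ∀ m : ℕ, r + N ≤ m → PowerSeries.coeff m ((Qp : PowerSeries F) * h) = 0 := by
    intro m hm
    rw [hQcoe, add_mul, Finset.sum_mul, map_add, one_mul, map_sum]
    have hcm : ∀ j ∈ Finset.range r,
        PowerSeries.coeff m (PowerSeries.C (a j) * PowerSeries.X ^ (r - j) * h)
          = a j * ω (j + (m + 1 - r)) := by
      intro j hj
      have hjr := Finset.mem_range.mp hj
      rw [mul_assoc, PowerSeries.coeff_C_mul, PowerSeries.coeff_X_pow_mul']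
      rw [if_pos (by omega), hh, PowerSeries.coeff_mk]
      congr 2
      omega
    rw [Finset.sum_congr rfl hcm, hh, PowerSeries.coeff_mk]
    have hmw : ω (m + 1) = ω (r + (m + 1 - r)) := by congr 1; omega
    rw [hmw]
    exact hrecN (m + 1 - r) (by omega)
  set P : F[X] := PowerSeries.trunc (r + N) ((Qp : PowerSeries F) * h) with hPdef
  clear_value P
  have hP : (P : PowerSeries F) = (Qp : PowerSeries F) * h := by
    ext n
    rw [Polynomial.coeff_coe, hPdef, PowerSeries.coeff_trunc]
    split_ifs with hn
    · rfl
    · exact (hvanish n (by omega)).symm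
  have hd2 : PowerSeries.derivativeFun h = h ^ 2 := by rw [hh]; exact h_deriv ω hsq
  have hder : ((derivative P : F[X]) : PowerSeries F)
      = (Qp : PowerSeries F) * h ^ 2 + h * ((derivative Qp : F[X]) : PowerSeries F) := by
    have hcd := congrArg PowerSeries.derivativeFun hP
    rw [PowerSeries.derivativeFun_mul, hd2, smul_eq_mul, smul_eq_mul] at hcd
    change PowerSeries.derivative F (P : PowerSeries F)
      = _ + _ * PowerSeries.derivative F (Qp : PowerSeries F) at hcd
    rw [PowerSeries.derivative_coe, PowerSeries.derivative_coe] at hcd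
    exact hcd
  have hpoly : Qp * derivative P = P ^ 2 + P * derivative Qp := by
    apply Polynomial.coe_inj.mp
    rw [Polynomial.coe_mul, Polynomial.coe_add, Polynomial.coe_mul, Polynomial.coe_pow]
    rw [hder, hP]
    ring
  set G := GCDMonoid.gcd P Qp with hG
  have hGne : G ≠ 0 := gcd_ne_zero_of_right hQne
  set A := P / G with hA
  set B := Qp / G with hB
  have hGA : G * A = P := EuclideanDomain.mul_div_cancel' hGne (gcd_dvd_left P Qp)
  have hGB : G * B = Qp := EuclideanDomain.mul_div_cancel' hGne (gcd_dvd_right P Qp)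
  have hcop : IsCoprime A B := isCoprime_div_gcd_div_gcd hQne
  clear_value G A B
  have key : derivative A * B = A * (A + derivative B) := by
    have h2 : (G * B) * derivative (G * A) = (G * A) ^ 2 + (G * A) * derivative (G * B) := by
      rw [hGA, hGB]; exact hpoly
    rw [derivative_mul, derivative_mul] at h2
    have h3 : G ^ 2 * (derivative A * B) = G ^ 2 * (A * (A + derivative B)) := by
      linear_combination h2
    exact mul_left_cancel₀ (pow_ne_zero 2 hGne) h3
  by_cases hA0 : A = 0
  · have hPz : P = 0 := by rw [← hGA, hA0, mul_zero]
    have hhz : h = 0 := by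
      have hc0 : (Qp : PowerSeries F) * h = 0 := by
        rw [← hP, hPz, Polynomial.coe_zero]
      rcases mul_eq_zero.mp hc0 with hc | hc
      · exact absurd (Polynomial.coe_eq_zero_iff.mp hc) hQne
      · exact hc
    refine ⟨0, fun i => i.elim0, fun i => i.elim0, ?_, hω0⟩
    intro m hm
    have h7 : ω m = PowerSeries.coeff (m - 1) h := by
      rw [hh, PowerSeries.coeff_mk]; congr 1; omega
    rw [h7, hhz, map_zero]
    simp
  · have hBne : B ≠ 0 := fun hc => hQne (by rw [← hGB, hc, mul_zero])
    have hsum : A + derivative B = 0 := by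
      rcases eq_or_ne (derivative A) 0 with hA' | hA'
      · have h0 : A * (A + derivative B) = 0 := by rw [← key, hA', zero_mul]
        exact (mul_eq_zero.mp h0).resolve_left hA0
      · have hAdeg : A.natDegree ≠ 0 := by
          intro hc
          exact hA' (by rw [Polynomial.eq_C_of_natDegree_eq_zero hc, derivative_C])
        have hdA' : (derivative A).natDegree < A.natDegree := natDegree_derivative_lt hAdeg
        have hABlt : A.natDegree < B.natDegree := by
          by_contra hge
          push_neg at hge
          have hB'cases : derivative B = 0 ∨ (derivative B).natDegree < A.natDegree := by
            rcases eq_or_ne B.natDegree 0 with h0 | h0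
            · exact Or.inl (by rw [Polynomial.eq_C_of_natDegree_eq_zero h0, derivative_C])
            · exact Or.inr (lt_of_lt_of_le (natDegree_derivative_lt h0) hge)
          have hABdeg : (A + derivative B).natDegree = A.natDegree := by
            rcases hB'cases with hc | hc
            · rw [hc, add_zero]
            · exact natDegree_add_eq_left_of_natDegree_lt hc
          have hne : A + derivative B ≠ 0 := by
            intro hc
            rw [hc, Polynomial.natDegree_zero] at hABdeg
            exact hAdeg hABdeg.symm
          have hLHS := congrArg Polynomial.natDegree key
          rw [Polynomial.natDegree_mul hA' hBne, Polynomial.natDegree_mul hA0 hne,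
            hABdeg] at hLHS
          omega
        have hdvd : B ∣ A + derivative B := by
          apply hcop.symm.dvd_of_dvd_mul_left
          exact ⟨derivative A, by rw [← key]; ring⟩
        by_contra hne0
        have h1 : B.natDegree ≤ (A + derivative B).natDegree :=
          Polynomial.natDegree_le_of_dvd hdvd hne0
        have h2 : (A + derivative B).natDegree ≤ max A.natDegree (derivative B).natDegree :=
          Polynomial.natDegree_add_le _ _
        have h3 : (derivative B).natDegree < B.natDegree :=
          natDegree_derivative_lt (by omega)
        omega
    have hAeq : A = derivative B := by
      have h4 := eq_neg_of_add_eq_zero_left hsum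
      rwa [CharTwo.neg_eq] at h4
    have hBcoeff0 : B.coeff 0 ≠ 0 := by
      have h5 : G.coeff 0 * B.coeff 0 = 1 := by
        rw [← Polynomial.mul_coeff_zero, hGB, hQ0]
      exact right_ne_zero_of_mul_eq_one h5
    have hsep : B.Separable := (Polynomial.separable_def B).mpr (hAeq ▸ hcop).symm
    have hBh : (B : PowerSeries F) * h = ((derivative B : F[X]) : PowerSeries F) := by
      have h6 : (G : PowerSeries F) * ((B : PowerSeries F) * h)
          = (G : PowerSeries F) * ((derivative B : F[X]) : PowerSeries F) := by
        rw [← mul_assoc, ← Polynomial.coe_mul, hGB, ← hP, ← hAeq, ← Polynomial.coe_mul, hGA]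
      refine mul_left_cancel₀ ?_ h6
      rw [Ne, Polynomial.coe_eq_zero_iff]
      exact hGne
    obtain ⟨d, u, hinj, hcoeff⟩ := rep_of_logderiv B hBcoeff0 hsep h hBh
    refine ⟨d, u, hinj, ?_, hω0⟩
    intro m hm
    have h7 : ω m = PowerSeries.coeff (m - 1) h := by
      rw [hh, PowerSeries.coeff_mk]; congr 1; omega
    rw [h7, hcoeff]
    refine Finset.sum_congr rfl fun i _ => ?_
    congr 1
    omega
end

section
/- Let F be a field, let u₁,…,u_s, v₁,…,v_r ∈ F be nonzero with u_ℓ ≠ v_j^{−1} for all ℓ, j, let A₀ ∈ F, m ∈ ℤ, and suppose the identity 1 = A₀²·(−t)^{r−s}·(∏_ℓ u_ℓ / ∏_j v_j)·(∏_{ℓ=1}^s (t−u_ℓ^{−1})(t−u_ℓ)) / (∏_{j=1}^r (t−v_j^{−1})(t−v_j)) holds in F(t). Then r = s, A₀² = 1, and the multisets {u₁,…,u_s} and {v₁,…,v_r} coincide. -/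
open Polynomial


/-- If 1 = A₀²·(−t)^{r−s}·(∏uₗ/∏vⱼ)·∏(t−uₗ⁻¹)(t−uₗ) / ∏(t−vⱼ⁻¹)(t−vⱼ) in F(t), with the
uₗ, vⱼ nonzero and uₗ ≠ vⱼ⁻¹, then r = s, A₀² = 1, and the multisets {uₗ} and {vⱼ}
coincide. -/
theorem stmt13 (F : Type*) [Field F] (s r : ℕ)
    (u : Fin s → F) (v : Fin r → F)
    (hu0 : ∀ ℓ, u ℓ ≠ 0) (hv0 : ∀ j, v j ≠ 0)
    (huv : ∀ ℓ j, u ℓ ≠ (v j)⁻¹)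
    (A₀ : F) (m : ℤ)
    (hid : (1 : RatFunc F)
      = (RatFunc.C A₀) ^ 2 * (-RatFunc.X) ^ ((r : ℤ) - (s : ℤ))
        * (RatFunc.C (∏ ℓ, u ℓ) / RatFunc.C (∏ j, v j))
        * (∏ ℓ : Fin s, (RatFunc.X - RatFunc.C (u ℓ)⁻¹) * (RatFunc.X - RatFunc.C (u ℓ)))
        / (∏ j : Fin r, (RatFunc.X - RatFunc.C (v j)⁻¹) * (RatFunc.X - RatFunc.C (v j)))) :
    r = s ∧ A₀ ^ 2 = 1 ∧
      Multiset.map u Finset.univ.val = Multiset.map v Finset.univ.val := by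
  classical
  have hu : (∏ ℓ, u ℓ) ≠ 0 := Finset.prod_ne_zero_iff.mpr fun ℓ _ => hu0 ℓ
  have hv : (∏ j, v j) ≠ 0 := Finset.prod_ne_zero_iff.mpr fun j _ => hv0 j
  -- nonzero facts in RatFunc
  have hainj := RatFunc.algebraMap_injective F
  have hX : (RatFunc.X : RatFunc F) ≠ 0 := RatFunc.X_ne_zero
  have hZ : (-RatFunc.X : RatFunc F) ≠ 0 := neg_ne_zero.mpr hX
  have hfac : ∀ a : F, (RatFunc.X - RatFunc.C a : RatFunc F) ≠ 0 := by
    intro a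
    have : (algebraMap F[X] (RatFunc F)) (X - C a) ≠ 0 := by
      rw [map_ne_zero_iff _ hainj]
      exact X_sub_C_ne_zero a
    simpa [map_sub, RatFunc.algebraMap_X, RatFunc.algebraMap_C] using this
  have hCne : ∀ a : F, a ≠ 0 → (RatFunc.C a : RatFunc F) ≠ 0 := by
    intro a ha
    have : (algebraMap F[X] (RatFunc F)) (C a) ≠ 0 :=
      RatFunc.algebraMap_ne_zero (by simpa using ha)
    simpa [RatFunc.algebraMap_C] using this
  have hcv : (RatFunc.C (∏ j, v j) : RatFunc F) ≠ 0 := hCne _ hv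
  have hPv' : (∏ j : Fin r, (RatFunc.X - RatFunc.C (v j)⁻¹) * (RatFunc.X - RatFunc.C (v j)) : RatFunc F) ≠ 0 :=
    Finset.prod_ne_zero_iff.mpr fun j _ => mul_ne_zero (hfac _) (hfac _)
  set PU : RatFunc F := ∏ ℓ : Fin s, (RatFunc.X - RatFunc.C (u ℓ)⁻¹) * (RatFunc.X - RatFunc.C (u ℓ)) with hPU
  set PV : RatFunc F := ∏ j : Fin r, (RatFunc.X - RatFunc.C (v j)⁻¹) * (RatFunc.X - RatFunc.C (v j)) with hPV
  set cu : RatFunc F := RatFunc.C (∏ ℓ, u ℓ) with hcu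
  set cv : RatFunc F := RatFunc.C (∏ j, v j) with hcvdef
  set a : RatFunc F := RatFunc.C A₀ with ha
  have hzz : (-RatFunc.X : RatFunc F) ^ ((r : ℤ) - (s : ℤ))
      = (-RatFunc.X) ^ r / (-RatFunc.X) ^ s := by
    rw [zpow_sub₀ hZ, zpow_natCast, zpow_natCast]
  rw [hzz] at hid
  have hXs : ((-RatFunc.X : RatFunc F)) ^ s ≠ 0 := pow_ne_zero _ hZ
  have key : cv * (-RatFunc.X) ^ s * PV = a ^ 2 * cu * (-RatFunc.X) ^ r * PU := by
    field_simp at hid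
    linear_combination hid
  -- transfer to polynomials
  set Pu : F[X] := ∏ ℓ : Fin s, (X - C (u ℓ)⁻¹) * (X - C (u ℓ)) with hPudef
  set Pv : F[X] := ∏ j : Fin r, (X - C (v j)⁻¹) * (X - C (v j)) with hPvdef
  have step1 : C (∏ j, v j) * (-X) ^ s * Pv = C (A₀ ^ 2 * ∏ ℓ, u ℓ) * (-X) ^ r * Pu := by
    apply hainj
    simpa [map_mul, map_prod, map_sub, map_neg, map_pow, RatFunc.algebraMap_X,
      RatFunc.algebraMap_C, hPudef, hPvdef, hPU, hPV, hcu, hcvdef, ha, mul_comm, mul_assoc, mul_left_comm] using key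
  -- monic & degree facts
  have hXne : (-X : F[X]) ≠ 0 := neg_ne_zero.mpr X_ne_zero
  have hXs' : ((-X : F[X]) ^ s) ≠ 0 := pow_ne_zero _ hXne
  have hXr' : ((-X : F[X]) ^ r) ≠ 0 := pow_ne_zero _ hXne
  have hmonPu : Pu.Monic :=
    monic_prod_of_monic _ _ fun ℓ _ => (monic_X_sub_C _).mul (monic_X_sub_C _)
  have hmonPv : Pv.Monic :=
    monic_prod_of_monic _ _ fun j _ => (monic_X_sub_C _).mul (monic_X_sub_C _)
  have hdegPu : Pu.natDegree = 2 * s := by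
    rw [hPudef, natDegree_prod _ _ fun i _ => mul_ne_zero (X_sub_C_ne_zero _) (X_sub_C_ne_zero _)]
    simp [natDegree_mul (X_sub_C_ne_zero _) (X_sub_C_ne_zero _), natDegree_X_sub_C, mul_comm]
  have hdegPv : Pv.natDegree = 2 * r := by
    rw [hPvdef, natDegree_prod _ _ fun i _ => mul_ne_zero (X_sub_C_ne_zero _) (X_sub_C_ne_zero _)]
    simp [natDegree_mul (X_sub_C_ne_zero _) (X_sub_C_ne_zero _), natDegree_X_sub_C, mul_comm]
  have hC : (C (∏ j, v j) : F[X]) ≠ 0 := fun h => hv (Polynomial.C_eq_zero.mp h)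
  have hLne : C (∏ j, v j) * (-X : F[X]) ^ s * Pv ≠ 0 :=
    mul_ne_zero (mul_ne_zero hC hXs') hmonPv.ne_zero
  have hA : A₀ ^ 2 * ∏ ℓ, u ℓ ≠ 0 := by
    intro h
    rw [h, map_zero, zero_mul, zero_mul] at step1
    exact hLne step1
  have hC' : (C (A₀ ^ 2 * ∏ ℓ, u ℓ) : F[X]) ≠ 0 := fun h => hA (Polynomial.C_eq_zero.mp h)
  have hdegZ : ∀ n : ℕ, ((-X : F[X]) ^ n).natDegree = n := by
    intro n; simp [natDegree_pow]
  have hrs : r = s := by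
    have hdeg := congrArg natDegree step1
    rw [natDegree_mul (mul_ne_zero hC hXs') hmonPv.ne_zero,
      natDegree_mul hC hXs', natDegree_C,
      natDegree_mul (mul_ne_zero hC' hXr') hmonPu.ne_zero,
      natDegree_mul hC' hXr', natDegree_C, hdegZ, hdegZ, hdegPu, hdegPv] at hdeg
    omega
  subst hrs
  -- leading coefficients
  have hlcZ : ∀ n : ℕ, ((-X : F[X]) ^ n).leadingCoeff = (-1) ^ n := by
    intro n; rw [leadingCoeff_pow]; simp
  have hlead : (∏ j, v j) = A₀ ^ 2 * ∏ ℓ, u ℓ := by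
    have hl := congrArg leadingCoeff step1
    simp only [leadingCoeff_mul, leadingCoeff_C, hmonPu.leadingCoeff, hmonPv.leadingCoeff,
      hlcZ, mul_one] at hl
    exact mul_right_cancel₀ (pow_ne_zero _ (neg_ne_zero.mpr (one_ne_zero (α := F)))) hl
  -- cancel to get Pv = Pu
  rw [← hlead] at step1
  have hPvPu : Pv = Pu := mul_left_cancel₀ (mul_ne_zero hC hXs') step1
  -- roots
  have hprodv : Pv = ((Multiset.map (fun j => (v j)⁻¹) Finset.univ.val
      + Multiset.map v Finset.univ.val).map fun a => X - C a).prod := by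
    rw [Multiset.map_add, Multiset.prod_add, Multiset.map_map, Multiset.map_map, hPvdef,
      Finset.prod_mul_distrib, Finset.prod_eq_multiset_prod, Finset.prod_eq_multiset_prod]
    rfl
  have hprodu : Pu = ((Multiset.map (fun ℓ => (u ℓ)⁻¹) Finset.univ.val
      + Multiset.map u Finset.univ.val).map fun a => X - C a).prod := by
    rw [Multiset.map_add, Multiset.prod_add, Multiset.map_map, Multiset.map_map, hPudef,
      Finset.prod_mul_distrib, Finset.prod_eq_multiset_prod, Finset.prod_eq_multiset_prod]
    rfl
  have hroots : Multiset.map (fun j => (v j)⁻¹) Finset.univ.val + Multiset.map v Finset.univ.val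
      = Multiset.map (fun ℓ => (u ℓ)⁻¹) Finset.univ.val + Multiset.map u Finset.univ.val := by
    have := congrArg Polynomial.roots hPvPu
    rwa [hprodv, hprodu, roots_multiset_prod_X_sub_C, roots_multiset_prod_X_sub_C] at this
  -- multiset equality
  have hM : Multiset.map u Finset.univ.val = Multiset.map v Finset.univ.val := by
    have hle : Multiset.map u Finset.univ.val ≤ Multiset.map v Finset.univ.val := by
      rw [Multiset.le_iff_count]
      intro b
      by_cases hmem : b ∈ Multiset.map u Finset.univ.val
      · obtain ⟨ℓ, -, rfl⟩ := Multiset.mem_map.mp hmem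
        have hnot : Multiset.count (u ℓ)
            (Multiset.map (fun j => (v j)⁻¹) Finset.univ.val) = 0 := by
          rw [Multiset.count_eq_zero]
          intro hmem'
          obtain ⟨j, -, hj⟩ := Multiset.mem_map.mp hmem'
          exact huv ℓ j hj.symm
        have hc := congrArg (Multiset.count (u ℓ)) hroots
        rw [Multiset.count_add, Multiset.count_add, hnot] at hc
        omega
      · rw [Multiset.count_eq_zero.mpr hmem]
        exact Nat.zero_le _
    exact Multiset.eq_of_le_of_card_le hle (by simp)
  have hprods : (∏ ℓ, u ℓ) = ∏ j, v j := by
    rw [Finset.prod_eq_multiset_prod, Finset.prod_eq_multiset_prod, hM]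
  have hA2 : A₀ ^ 2 = 1 := by
    have : A₀ ^ 2 * ∏ ℓ, u ℓ = 1 * ∏ ℓ, u ℓ := by rw [one_mul, ← hlead, hprods]
    exact mul_right_cancel₀ hu this
  exact ⟨rfl, hA2, hM⟩
end

section
/- Let R be an integral domain, A a unital R-algebra with involution *, and J a *-invariant two-sided ideal of A which is a cellular ideal. If the quotient algebra H = A/J is cellular with respect to the induced involution, then A is cellular; a cell datum for A is obtained by taking Λ = Λ_J ⊔ Λ_H ordered so that every element of Λ_J is greater than every element of Λ_H (extending the original partial orders), with cellular basis the union of the cellular basis of J and arbitrary lifts to A of the cellular basis elements of H. -/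
/-- An R-linear algebra involution (anti-automorphism of order 2). -/
def IsInvolution (R A : Type*) [CommRing R] [Ring A] [Algebra R A]
    (σ : A →ₗ[R] A) : Prop :=
  (∀ a b : A, σ (a * b) = σ b * σ a) ∧ (∀ a : A, σ (σ a) = a) ∧ σ 1 = 1

/-- The span Ă^λ of the basis elements c^μ_{s,t} with μ > λ. -/
def breve (R : Type*) {A : Type*} [CommRing R] [Ring A] [Algebra R A]
    {Λ : Type*} [PartialOrder Λ] {T : Λ → Type*}
    (c : ∀ l, T l → T l → A) (l : Λ) : Submodule R A :=
  Submodule.span R {x | ∃ m s t, l < m ∧ x = c m s t}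

/-- Graham–Lehrer cell datum (in the weakened form): the c^λ_{s,t} are an R-basis,
left multiplication is upper-triangular with coefficients independent of t, and the
involution σ sends c^λ_{s,t} to c^λ_{t,s} modulo Ă^λ. -/
def IsCellDatum (R A : Type*) [CommRing R] [Ring A] [Algebra R A]
    (σ : A →ₗ[R] A) (Λ : Type*) [PartialOrder Λ] (T : Λ → Type*)
    (ft : ∀ l, Fintype (T l)) (c : ∀ l, T l → T l → A) : Prop :=
  LinearIndependent R (fun p : Σ l : Λ, T l × T l => c p.1 p.2.1 p.2.2) ∧
  Submodule.span R (Set.range fun p : Σ l : Λ, T l × T l => c p.1 p.2.1 p.2.2) = ⊤ ∧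
  (∀ (l : Λ) (s : T l) (a : A), ∃ rc : T l → R, ∀ t : T l,
    (a * c l s t - (letI := ft l; ∑ v : T l, rc v • c l v t)) ∈ breve R c l) ∧
  (∀ (l : Λ) (s t : T l), σ (c l s t) - c l t s ∈ breve R c l)

/-- A cellular ideal: a *-invariant ideal J with cell-datum-like data whose basis spans J,
where the multiplication condition holds for all a ∈ A (not just a ∈ J). -/
def IsCellularIdealDatum (R A : Type*) [CommRing R] [Ring A] [Algebra R A]
    (σ : A →ₗ[R] A) (J : Submodule R A) (Λ : Type*) [PartialOrder Λ] (T : Λ → Type*)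
    (ft : ∀ l, Fintype (T l)) (c : ∀ l, T l → T l → A) : Prop :=
  LinearIndependent R (fun p : Σ l : Λ, T l × T l => c p.1 p.2.1 p.2.2) ∧
  Submodule.span R (Set.range fun p : Σ l : Λ, T l × T l => c p.1 p.2.1 p.2.2) = J ∧
  (∀ (l : Λ) (s : T l) (a : A), ∃ rc : T l → R, ∀ t : T l,
    (a * c l s t - (letI := ft l; ∑ v : T l, rc v • c l v t)) ∈ breve R c l) ∧
  (∀ (l : Λ) (s t : T l), σ (c l s t) - c l t s ∈ breve R c l)

/-- The partial order on ΛJ ⊕ ΛH extending the two orders, in which every element of ΛJ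
is greater than every element of ΛH. -/
def sumPO (ΛJ ΛH : Type*) [PartialOrder ΛJ] [PartialOrder ΛH] :
    PartialOrder (ΛJ ⊕ ΛH) where
  le x y := match x, y with
    | .inl a, .inl b => a ≤ b
    | .inr a, .inr b => a ≤ b
    | .inr _, .inl _ => True
    | .inl _, .inr _ => False
  lt x y := (match x, y with
    | .inl a, .inl b => a ≤ b
    | .inr a, .inr b => a ≤ b
    | .inr _, .inl _ => True
    | .inl _, .inr _ => False) ∧ ¬ (match y, x with
    | .inl a, .inl b => a ≤ b
    | .inr a, .inr b => a ≤ b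
    | .inr _, .inl _ => True
    | .inl _, .inr _ => False)
  lt_iff_le_not_ge _ _ := Iff.rfl
  le_refl x := by cases x <;> simp
  le_trans x y z hxy hyz := by
    cases x <;> cases y <;> cases z <;> simp_all <;> exact le_trans hxy hyz
  le_antisymm x y hxy hyx := by
    cases x <;> cases y <;> simp_all
    · exact le_antisymm hxy hyx
    · exact le_antisymm hxy hyx

universe w

/-- Extension of cellular structures: if J is a cellular ideal of A and the quotient
H = A/J (presented by a surjective algebra map π with kernel J, compatible with the
involutions) is cellular, then A is cellular, with cell datum indexed by ΛJ ⊕ ΛH ordered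
so that ΛJ-elements dominate ΛH-elements, and basis the union of the cellular basis of J
with arbitrary lifts of the cellular basis of H. -/
theorem stmt14 (R A H : Type*) [CommRing R] [IsDomain R] [Ring A] [Algebra R A]
    [Ring H] [Algebra R H]
    (σ : A →ₗ[R] A) (hσ : IsInvolution R A σ)
    (J : Submodule R A)
    (hJl : ∀ (a x : A), x ∈ J → a * x ∈ J)
    (hJr : ∀ (a x : A), x ∈ J → x * a ∈ J)
    (hJσ : ∀ x ∈ J, σ x ∈ J)
    (π : A →ₐ[R] H) (hπ : Function.Surjective π)
    (hker : ∀ x : A, π x = 0 ↔ x ∈ J)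
    (τ : H →ₗ[R] H) (hτ : IsInvolution R H τ)
    (hcompat : ∀ x : A, τ (π x) = π (σ x))
    (ΛJ : Type*) [PartialOrder ΛJ] (TJ : ΛJ → Type w) (ftJ : ∀ l, Fintype (TJ l))
    (cJ : ∀ l, TJ l → TJ l → A)
    (hcJ : IsCellularIdealDatum R A σ J ΛJ TJ ftJ cJ)
    (ΛH : Type*) [PartialOrder ΛH] (TH : ΛH → Type w) (ftH : ∀ l, Fintype (TH l))
    (cH : ∀ l, TH l → TH l → H)
    (hcH : IsCellDatum R H τ ΛH TH ftH cH) :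
    ∃ ch : ∀ l, TH l → TH l → A,
      (∀ l s t, π (ch l s t) = cH l s t) ∧
      (letI : PartialOrder (ΛJ ⊕ ΛH) := sumPO ΛJ ΛH
       IsCellDatum R A σ (ΛJ ⊕ ΛH)
        (fun l => match l with
          | .inl a => TJ a
          | .inr b => TH b)
        (fun l => match l with
          | .inl a => ftJ a
          | .inr b => ftH b)
        (fun l => match l with
          | .inl a => cJ a
          | .inr b => ch b)) := by
  classical
  set ch : ∀ l, TH l → TH l → A := fun l s t => Function.surjInv hπ (cH l s t) with hchdef
  have hπch : ∀ l s t, π (ch l s t) = cH l s t := fun l s t => Function.surjInv_eq hπ _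
  refine ⟨ch, hπch, ?_⟩
  letI : PartialOrder (ΛJ ⊕ ΛH) := sumPO ΛJ ΛH
  set T : ΛJ ⊕ ΛH → Type w := fun l => match l with
    | .inl a => TJ a
    | .inr b => TH b with hT
  set c : ∀ l : ΛJ ⊕ ΛH, T l → T l → A := fun l => match l with
    | .inl a => cJ a
    | .inr b => ch b with hc
  -- order facts
  have lt_inl_inl : ∀ (a b : ΛJ),
      @LT.lt (ΛJ ⊕ ΛH) (@Preorder.toLT _ (@PartialOrder.toPreorder _ (sumPO ΛJ ΛH))) (Sum.inl a) (Sum.inl b) ↔ a < b := by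
    intro a b
    change (a ≤ b ∧ ¬ b ≤ a) ↔ _
    exact (lt_iff_le_not_ge).symm
  have lt_inr_inr : ∀ (a b : ΛH),
      @LT.lt (ΛJ ⊕ ΛH) (@Preorder.toLT _ (@PartialOrder.toPreorder _ (sumPO ΛJ ΛH))) (Sum.inr a) (Sum.inr b) ↔ a < b := by
    intro a b
    change (a ≤ b ∧ ¬ b ≤ a) ↔ _
    exact (lt_iff_le_not_ge).symm
  have lt_inr_inl : ∀ (a : ΛH) (b : ΛJ),
      @LT.lt (ΛJ ⊕ ΛH) (@Preorder.toLT _ (@PartialOrder.toPreorder _ (sumPO ΛJ ΛH))) (Sum.inr a) (Sum.inl b) := by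
    intro a b
    exact ⟨trivial, fun h => h⟩
  -- families
  set vJ : (Σ l : ΛJ, TJ l × TJ l) → A := fun p => cJ p.1 p.2.1 p.2.2 with hvJ
  set vA : (Σ l : ΛH, TH l × TH l) → A := fun p => ch p.1 p.2.1 p.2.2 with hvA
  set vH : (Σ l : ΛH, TH l × TH l) → H := fun p => cH p.1 p.2.1 p.2.2 with hvH
  set vC : (Σ l : ΛJ ⊕ ΛH, T l × T l) → A := fun p => c p.1 p.2.1 p.2.2 with hvC
  have hπvA : ∀ p, π (vA p) = vH p := fun p => hπch _ _ _
  have hJspan : Submodule.span R (Set.range vJ) = J := hcJ.2.1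
  have hHspan : Submodule.span R (Set.range vH) = ⊤ := hcH.2.1
  -- breve inclusions
  have hbJ : ∀ l : ΛJ, breve R cJ l ≤ breve R c (Sum.inl l) := by
    intro l
    apply Submodule.span_mono
    rintro x ⟨m, s, t, hm, rfl⟩
    exact ⟨Sum.inl m, s, t, (lt_inl_inl l m).mpr hm, rfl⟩
  have hJle : ∀ l : ΛH, J ≤ breve R c (Sum.inr l) := by
    intro l
    rw [← hJspan]
    apply Submodule.span_le.mpr
    rintro x ⟨p, rfl⟩
    exact Submodule.subset_span ⟨Sum.inl p.1, p.2.1, p.2.2, lt_inr_inl l p.1, rfl⟩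
  -- key transfer lemma
  have hkey : ∀ (l : ΛH) (x : A), π x ∈ breve R cH l → x ∈ breve R c (Sum.inr l) := by
    intro l x hx
    set SA : Set A := {y | ∃ m s t, l < m ∧ y = ch m s t} with hSA
    have himg : {y : H | ∃ m s t, l < m ∧ y = cH m s t} = π '' SA := by
      ext y
      constructor
      · rintro ⟨m, s, t, hm, rfl⟩
        exact ⟨ch m s t, ⟨m, s, t, hm, rfl⟩, hπch m s t⟩
      · rintro ⟨z, ⟨m, s, t, hm, rfl⟩, rfl⟩
        exact ⟨m, s, t, hm, hπch m s t⟩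
    have hx' : π x ∈ Submodule.map π.toLinearMap (Submodule.span R SA) := by
      rw [Submodule.map_span]
      rw [breve, himg] at hx
      exact hx
    obtain ⟨y, hy, hyx⟩ := hx'
    have h1 : x - y ∈ J := by
      rw [← hker, map_sub, sub_eq_zero]
      exact hyx.symm
    have h2 : y ∈ breve R c (Sum.inr l) := by
      refine Submodule.span_le.mpr ?_ hy
      rintro z ⟨m, s, t, hm, rfl⟩
      exact Submodule.subset_span ⟨Sum.inr m, s, t, (lt_inr_inr l m).mpr hm, rfl⟩
    have := Submodule.add_mem _ (hJle l h1) h2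
    simpa using this
  -- linear independence
  have hindH : LinearIndependent R vH := hcH.1
  have hindA : LinearIndependent R vA := by
    apply LinearIndependent.of_comp π.toLinearMap
    have : (π.toLinearMap ∘ vA) = vH := funext hπvA
    rw [this]
    exact hindH
  have hdisj : Disjoint (Submodule.span R (Set.range vJ)) (Submodule.span R (Set.range vA)) := by
    rw [hJspan]
    rw [Submodule.disjoint_def]
    intro x hxJ hxA
    obtain ⟨cc, hcc⟩ := Finsupp.mem_span_range_iff_exists_finsupp.mp hxA
    have hπx : Finsupp.linearCombination R vH cc = 0 := by
      rw [Finsupp.linearCombination_apply]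
      have : π x = 0 := (hker x).mpr hxJ
      rw [← this, ← hcc, map_finsuppSum]
      refine Finsupp.sum_congr ?_
      intro i _
      rw [map_smul, hπvA]
    have hcc0 : cc = 0 := linearIndependent_iff.mp hindH cc hπx
    rw [← hcc, hcc0]
    simp
  let e : ((Σ l : ΛJ, TJ l × TJ l) ⊕ (Σ l : ΛH, TH l × TH l)) ≃ (Σ l : ΛJ ⊕ ΛH, T l × T l) :=
    { toFun := Sum.elim (fun p => ⟨Sum.inl p.1, p.2⟩) (fun p => ⟨Sum.inr p.1, p.2⟩)
      invFun := fun p => match p with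
        | ⟨.inl a, x⟩ => Sum.inl ⟨a, x⟩
        | ⟨.inr b, x⟩ => Sum.inr ⟨b, x⟩
      left_inv := by rintro (⟨a, x⟩ | ⟨b, x⟩) <;> rfl
      right_inv := by rintro ⟨(a | b), x⟩ <;> rfl }
  have hcomp : vC ∘ e = Sum.elim vJ vA := by
    funext p
    rcases p with ⟨a, x⟩ | ⟨b, x⟩ <;> rfl
  have hindC : LinearIndependent R vC := by
    rw [← linearIndependent_equiv e, hcomp]
    exact LinearIndependent.sum_type hcJ.1 hindA hdisj
  -- span
  have hsub1 : Submodule.span R (Set.range vJ) ≤ Submodule.span R (Set.range vC) := by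
    apply Submodule.span_mono
    rintro x ⟨p, rfl⟩
    exact ⟨⟨Sum.inl p.1, p.2⟩, rfl⟩
  have hsub2 : Submodule.span R (Set.range vA) ≤ Submodule.span R (Set.range vC) := by
    apply Submodule.span_mono
    rintro x ⟨p, rfl⟩
    exact ⟨⟨Sum.inr p.1, p.2⟩, rfl⟩
  have hspanC : Submodule.span R (Set.range vC) = ⊤ := by
    rw [eq_top_iff]
    intro a _
    have h1 : π a ∈ Submodule.map π.toLinearMap (Submodule.span R (Set.range vA)) := by
      rw [Submodule.map_span]
      have : ⇑π.toLinearMap '' Set.range vA = Set.range vH := by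
        rw [← Set.range_comp]
        exact congrArg Set.range (funext hπvA)
      rw [this, hHspan]
      trivial
    obtain ⟨b, hb, hba⟩ := h1
    have hab : a - b ∈ J := by
      rw [← hker, map_sub, sub_eq_zero]
      exact hba.symm
    have : a = (a - b) + b := by simp
    rw [this]
    exact Submodule.add_mem _ (hsub1 (hJspan ▸ hab)) (hsub2 hb)
  refine ⟨hindC, hspanC, ?_, ?_⟩
  · rintro (l | l) s a
    · obtain ⟨rc, hrc⟩ := hcJ.2.2.1 l s a
      exact ⟨rc, fun t => hbJ l (hrc t)⟩
    · obtain ⟨rc, hrc⟩ := hcH.2.2.1 l s (π a)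
      refine ⟨rc, fun t => ?_⟩
      apply hkey l
      have : π (a * ch l s t - ∑ v : TH l, rc v • ch l v t)
          = π a * cH l s t - ∑ v : TH l, rc v • cH l v t := by
        rw [map_sub, map_mul, hπch, map_sum]
        congr 1
        refine Finset.sum_congr rfl ?_
        intro v _
        rw [map_smul, hπch]
      rw [this]
      exact hrc t
  · rintro (l | l) s t
    · exact hbJ l (hcJ.2.2.2 l s t)
    · apply hkey l
      have : π (σ (ch l s t) - ch l t s) = τ (cH l s t) - cH l t s := by
        rw [map_sub, ← hπch l s t, hcompat, hπch l t s]
      rw [this]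
      exact hcH.2.2.2 l s t
end
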